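/- Let k ≥ 1, I₀ a dyadic interval, and for each I ∈ D_k(I₀) let a_I⁺ = 1 + α_I and a_I⁻ = 1 − α_I with |α_I| ≤ 1/4 and Σ_I α_I = 0. For a dyadic interval I with I ⊆ I₀, |I| ≥ 2^{−k}|I₀|, and I ≠ I₀, define θ_I^± = (Σ_{J ∈ D_k(I₀), J ⊆ I} a_J^±) / (Σ_{J ∈ D_k(I₀), J ⊆ Ĩ} a_J^±), where Ĩ is the dyadic parent of I. Then 3/10 ≤ θ_I^± ≤ 5/6, θ_{I⁺}^± + θ_{I⁻}^± = 1, and for every I ∈ D_k(I₀), the product of θ_J^± over all dyadic J with I ⊆ J ⊊ I₀ equals 2^{−k} a_I^±. -/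

import Mathlib

open Finset
noncomputable section

/-- Sum of the leaf weights `a_J`, `J ∈ D_k(I₀)`, over the leaves `J ⊆ I`, where `I` is the
node of the dyadic tree at depth `n` with index `r < 2^n` (its leaves are
`s ∈ [r·2^{k-n}, (r+1)·2^{k-n})`). -/
def leafSum (a : ℕ → ℝ) (k n r : ℕ) : ℝ :=
  ∑ s ∈ Finset.Ico (r * 2 ^ (k - n)) ((r + 1) * 2 ^ (k - n)), a s

/-- `θ_I = (Σ_{J ∈ D_k(I₀), J ⊆ I} a_J) / (Σ_{J ∈ D_k(I₀), J ⊆ Ĩ} a_J)`, where `I` is the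
node at depth `n ≥ 1` with index `r` and `Ĩ = (n-1, r/2)` is its dyadic parent. -/
def theta (a : ℕ → ℝ) (k n r : ℕ) : ℝ := leafSum a k n r / leafSum a k (n - 1) (r / 2)

lemma leafSum_bounds (a : ℕ → ℝ) (k : ℕ)
    (hb : ∀ s < 2 ^ k, (3/4 : ℝ) ≤ a s ∧ a s ≤ 5/4)
    {n r : ℕ} (hn : n ≤ k) (hr : r < 2 ^ n) :
    (3/4 : ℝ) * 2 ^ (k - n) ≤ leafSum a k n r ∧ leafSum a k n r ≤ (5/4) * 2 ^ (k - n) := by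
  have hmem : ∀ s ∈ Finset.Ico (r * 2 ^ (k - n)) ((r + 1) * 2 ^ (k - n)), s < 2 ^ k := by
    intro s hs
    have h1 := (Finset.mem_Ico.mp hs).2
    have h2 : (r + 1) * 2 ^ (k - n) ≤ 2 ^ n * 2 ^ (k - n) :=
      Nat.mul_le_mul_right _ hr
    have h3 : 2 ^ n * 2 ^ (k - n) = 2 ^ k := by rw [← pow_add]; congr 1; omega
    omega
  have hcard : (Finset.Ico (r * 2 ^ (k - n)) ((r + 1) * 2 ^ (k - n))).card = 2 ^ (k - n) := by
    rw [Nat.card_Ico, add_mul, one_mul, Nat.add_sub_cancel_left]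
  constructor
  · calc (3/4 : ℝ) * 2 ^ (k - n)
        = ∑ _s ∈ Finset.Ico (r * 2 ^ (k - n)) ((r + 1) * 2 ^ (k - n)), (3/4 : ℝ) := by
          rw [Finset.sum_const, hcard, nsmul_eq_mul]; push_cast; ring
      _ ≤ leafSum a k n r := Finset.sum_le_sum fun s hs => (hb s (hmem s hs)).1
  · calc leafSum a k n r
        ≤ ∑ _s ∈ Finset.Ico (r * 2 ^ (k - n)) ((r + 1) * 2 ^ (k - n)), (5/4 : ℝ) :=
          Finset.sum_le_sum fun s hs => (hb s (hmem s hs)).2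
      _ = (5/4 : ℝ) * 2 ^ (k - n) := by
          rw [Finset.sum_const, hcard, nsmul_eq_mul]; push_cast; ring

lemma leafSum_pos (a : ℕ → ℝ) (k : ℕ)
    (hb : ∀ s < 2 ^ k, (3/4 : ℝ) ≤ a s ∧ a s ≤ 5/4)
    {n r : ℕ} (hn : n ≤ k) (hr : r < 2 ^ n) : 0 < leafSum a k n r := by
  have h := (leafSum_bounds a k hb hn hr).1
  have : (0:ℝ) < (3/4 : ℝ) * 2 ^ (k - n) := by positivity
  linarith

lemma theta_bounds (a : ℕ → ℝ) (k : ℕ)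
    (hb : ∀ s < 2 ^ k, (3/4 : ℝ) ≤ a s ∧ a s ≤ 5/4)
    {n r : ℕ} (h1 : 1 ≤ n) (h2 : n ≤ k) (hr : r < 2 ^ n) :
    3/10 ≤ theta a k n r ∧ theta a k n r ≤ 5/6 := by
  have hpow2 : 2 ^ (n - 1) * 2 = 2 ^ n := by rw [← pow_succ]; congr 1; omega
  have hrp : r / 2 < 2 ^ (n - 1) := by omega
  have hC := leafSum_bounds a k hb h2 hr
  have hP := leafSum_bounds a k hb (by omega) hrp
  have hpow : (2:ℝ) ^ (k - (n - 1)) = 2 * 2 ^ (k - n) := by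
    rw [← pow_succ']; congr 1; omega
  rw [hpow] at hP
  have hm : (0:ℝ) < 2 ^ (k - n) := by positivity
  have hPpos : 0 < leafSum a k (n - 1) (r / 2) := by nlinarith [hP.1]
  constructor
  · rw [theta, le_div_iff₀ hPpos]; nlinarith [hC.1, hP.2]
  · rw [theta, div_le_iff₀ hPpos]; nlinarith [hC.2, hP.1]

lemma leafSum_split (a : ℕ → ℝ) (k n r : ℕ) (hn : n < k) :
    leafSum a k n r = leafSum a k (n + 1) (2 * r) + leafSum a k (n + 1) (2 * r + 1) := by
  unfold leafSum
  have h2 : 2 ^ (k - n) = 2 ^ (k - (n + 1)) * 2 := by rw [← pow_succ]; congr 1; omega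
  have e1 : r * 2 ^ (k - n) = 2 * r * 2 ^ (k - (n + 1)) := by rw [h2]; ring
  have e2 : (r + 1) * 2 ^ (k - n) = (2 * r + 1 + 1) * 2 ^ (k - (n + 1)) := by rw [h2]; ring
  rw [e1, e2]
  rw [← Finset.sum_Ico_consecutive a
    (Nat.mul_le_mul_right _ (by omega : 2 * r ≤ 2 * r + 1))
    (Nat.mul_le_mul_right _ (by omega : 2 * r + 1 ≤ 2 * r + 1 + 1))]

lemma theta_add (a : ℕ → ℝ) (k : ℕ)
    (hb : ∀ s < 2 ^ k, (3/4 : ℝ) ≤ a s ∧ a s ≤ 5/4)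
    {n r : ℕ} (hn : n < k) (hr : r < 2 ^ n) :
    theta a k (n + 1) (2 * r) + theta a k (n + 1) (2 * r + 1) = 1 := by
  have hPpos : 0 < leafSum a k n r := leafSum_pos a k hb (le_of_lt hn) hr
  have e2 : 2 * r / 2 = r := by omega
  have e3 : (2 * r + 1) / 2 = r := by omega
  simp only [theta, Nat.add_sub_cancel, e2, e3]
  rw [← add_div, ← leafSum_split a k n r hn, div_self hPpos.ne']

lemma theta_prod (a : ℕ → ℝ) (k : ℕ)
    (hb : ∀ s < 2 ^ k, (3/4 : ℝ) ≤ a s ∧ a s ≤ 5/4)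
    (hs : ∑ r ∈ Finset.range (2 ^ k), a r = 2 ^ k)
    {r : ℕ} (hr : r < 2 ^ k) :
    ∏ n ∈ Finset.Icc 1 k, theta a k n (r / 2 ^ (k - n)) = (2 : ℝ) ^ (-(k : ℤ)) * a r := by
  have hidx : ∀ j ≤ k, r / 2 ^ (k - j) < 2 ^ j := by
    intro j hj
    have h3 : 2 ^ j * 2 ^ (k - j) = 2 ^ k := by rw [← pow_add]; congr 1; omega
    have : 2 ^ (k - j) > 0 := Nat.pow_pos (by norm_num)
    rw [Nat.div_lt_iff_lt_mul this]; omega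
  have key : ∀ j ≤ k, ∏ n ∈ Finset.Icc 1 j, theta a k n (r / 2 ^ (k - n))
      = leafSum a k j (r / 2 ^ (k - j)) / leafSum a k 0 (r / 2 ^ k) := by
    intro j hj
    induction j with
    | zero =>
      rw [Finset.Icc_eq_empty (by omega), Finset.prod_empty]
      exact (div_self (leafSum_pos a k hb (Nat.zero_le _) (hidx 0 (Nat.zero_le _))).ne').symm
    | succ j ih =>
      have hjk : j ≤ k := by omega
      rw [Finset.prod_Icc_succ_top (by omega : 1 ≤ j + 1), ih hjk]
      have hA : leafSum a k j (r / 2 ^ (k - j)) ≠ 0 :=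
        (leafSum_pos a k hb hjk (hidx j hjk)).ne'
      have hpar : r / 2 ^ (k - (j + 1)) / 2 = r / 2 ^ (k - j) := by
        rw [Nat.div_div_eq_div_mul, ← pow_succ]; congr 2; omega
      rw [theta, Nat.add_sub_cancel, hpar, div_mul_div_comm, mul_comm,
        mul_div_assoc, mul_comm (leafSum a k 0 (r / 2 ^ k)) _, ← div_div,
        div_self hA, one_div, ← div_eq_mul_inv]
  have hk0 : r / 2 ^ k = 0 := Nat.div_eq_of_lt hr
  have hfinal := key k le_rfl
  rw [Nat.sub_self, pow_zero, Nat.div_one] at hfinal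
  rw [hfinal, hk0]
  have h1 : leafSum a k k r = a r := by
    unfold leafSum
    rw [Nat.sub_self, pow_zero, mul_one, mul_one]
    rw [Finset.sum_Ico_eq_sum_range]
    simp
  have h2 : leafSum a k 0 0 = 2 ^ k := by
    unfold leafSum
    rw [Nat.sub_zero, zero_mul, zero_add, one_mul, ← Finset.range_eq_Ico, hs]
  rw [h1, h2, zpow_neg, zpow_natCast]
  field_simp

/-- with `a_I^± = 1 ± α_I`, `|α_I| ≤ 1/4`, `Σ α_I = 0`, the ratios
`θ_I^±` satisfy `3/10 ≤ θ_I^± ≤ 5/6`, `θ_{I⁺}^± + θ_{I⁻}^± = 1`, and for each leaf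
`I ∈ D_k(I₀)` the product of `θ_J^±` over all `J` with `I ⊆ J ⊊ I₀` is `2^{-k} a_I^±`. -/
theorem theta_properties (k : ℕ) (hk : 1 ≤ k) (α : ℕ → ℝ)
    (hα : ∀ r < 2 ^ k, |α r| ≤ 1 / 4)
    (hsum : ∑ r ∈ Finset.range (2 ^ k), α r = 0) :
    (∀ n r, 1 ≤ n → n ≤ k → r < 2 ^ n →
      (3 / 10 ≤ theta (fun s => 1 + α s) k n r ∧ theta (fun s => 1 + α s) k n r ≤ 5 / 6) ∧
      (3 / 10 ≤ theta (fun s => 1 - α s) k n r ∧ theta (fun s => 1 - α s) k n r ≤ 5 / 6)) ∧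
    (∀ n r, n < k → r < 2 ^ n →
      theta (fun s => 1 + α s) k (n + 1) (2 * r) +
        theta (fun s => 1 + α s) k (n + 1) (2 * r + 1) = 1 ∧
      theta (fun s => 1 - α s) k (n + 1) (2 * r) +
        theta (fun s => 1 - α s) k (n + 1) (2 * r + 1) = 1) ∧
    (∀ r < 2 ^ k,
      (∏ n ∈ Finset.Icc 1 k, theta (fun s => 1 + α s) k n (r / 2 ^ (k - n))) =
        (2 : ℝ) ^ (-(k : ℤ)) * (1 + α r) ∧
      (∏ n ∈ Finset.Icc 1 k, theta (fun s => 1 - α s) k n (r / 2 ^ (k - n))) =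
        (2 : ℝ) ^ (-(k : ℤ)) * (1 - α r)) := by
  have hbp : ∀ s < 2 ^ k, (3/4 : ℝ) ≤ 1 + α s ∧ 1 + α s ≤ 5/4 := by
    intro s hs
    have := abs_le.mp (hα s hs)
    constructor <;> linarith [this.1, this.2]
  have hbm : ∀ s < 2 ^ k, (3/4 : ℝ) ≤ 1 - α s ∧ 1 - α s ≤ 5/4 := by
    intro s hs
    have := abs_le.mp (hα s hs)
    constructor <;> linarith [this.1, this.2]
  have hsp : ∑ r ∈ Finset.range (2 ^ k), (1 + α r) = (2 : ℝ) ^ k := by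
    rw [Finset.sum_add_distrib, hsum, Finset.sum_const, Finset.card_range]
    push_cast; ring
  have hsm : ∑ r ∈ Finset.range (2 ^ k), (1 - α r) = (2 : ℝ) ^ k := by
    rw [Finset.sum_sub_distrib, hsum, Finset.sum_const, Finset.card_range]
    push_cast; ring
  refine ⟨fun n r h1 h2 hr => ⟨theta_bounds _ k hbp h1 h2 hr, theta_bounds _ k hbm h1 h2 hr⟩,
    fun n r hn hr => ⟨theta_add _ k hbp hn hr, theta_add _ k hbm hn hr⟩,
    fun r hr => ⟨theta_prod _ k hbp hsp hr, theta_prod _ k hbm hsm hr⟩⟩
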